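/- The number of marked plane binary trees with n+2 leaves, i.e., plane binary trees with exactly one last branching vertex distinguished, is binomial(2n, n). -/

import Mathlib

/-- Plane binary trees: every internal vertex has exactly two ordered children. -/
inductive PTree where
  | leaf : PTree
  | node : PTree → PTree → PTree
  deriving DecidableEq

namespace PTree

/-- number of leaves (endpoints) -/
def numLeaves : PTree → ℕ
  | leaf => 1
  | node l r => numLeaves l + numLeaves r

/-- directions of the leaves of a subtree which is itself a `b`-child
(`true` = left child, `false` = right child), in left-to-right order. -/
def dirsAux : PTree → Bool → List Bool
  | leaf, b => [b]
  | node l r, _ => dirsAux l true ++ dirsAux r false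

/-- the left/right-child directions of all leaves of a tree, left to right
(`true` = left child, `false` = right child). -/
def dirs : PTree → List Bool
  | leaf => []
  | node l r => dirsAux l true ++ dirsAux r false

/-- The reduction map `R`: the directions of the 2nd through (n+1)-th leaves;
`true` = • (occupied site, left child), `false` = ∘ (empty site, right child). -/
def red (T : PTree) : List Bool := ((dirs T).drop 1).dropLast

/-- number of internal vertices on the path from the leftmost leaf to the root
(root included). -/
def lCount : PTree → ℕ
  | leaf => 0
  | node l _ => lCount l + 1

/-- number of internal vertices on the path from the rightmost leaf to the root
(root included). -/
def rCount : PTree → ℕ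
  | leaf => 0
  | node _ r => rCount r + 1

/-- number of last branching vertices (internal vertices whose two children are leaves). -/
def lbCount : PTree → ℕ
  | leaf => 0
  | node leaf leaf => 1
  | node l r => lbCount l + lbCount r

end PTree

/-- Marked plane binary trees: a plane binary tree with exactly one of its
last branching vertices marked (the constructor `mark` is the marked vertex,
a vertex with two leaf children). -/
inductive MTree where
  | mark : MTree
  | nodeL : MTree → PTree → MTree
  | nodeR : PTree → MTree → MTree
  deriving DecidableEq

namespace MTree

/-- forgetful map to plane binary trees -/
def forget : MTree → PTree
  | mark => .node .leaf .leaf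
  | nodeL l r => .node (forget l) r
  | nodeR l r => .node l (forget r)

/-- collapse the marked vertex (with its two leaf children) to a single leaf. -/
def collapseT : MTree → PTree
  | mark => .leaf
  | nodeL l r => .node (collapseT l) r
  | nodeR l r => .node l (collapseT r)

/-- index (left to right, starting from 0) of the leaf of `collapseT` obtained
by collapsing the marked vertex. -/
def markIdx : MTree → ℕ
  | mark => 0
  | nodeL l _ => markIdx l
  | nodeR l r => l.numLeaves + markIdx r

end MTree

/-- replace the `i`-th leaf of a tree by a marked last branching vertex. -/
def expand : PTree → ℕ → MTree
  | .leaf, _ => .mark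
  | .node l r, i =>
      if i < l.numLeaves then .nodeL (expand l i) r
      else .nodeR l (expand r (i - l.numLeaves))

/-- index of the next right-child (`false`) leaf strictly after position `i`;
if there is none, the index of the rightmost left-child (`true`) leaf. -/
def nextFalseIdx (w : List Bool) (i : ℕ) : ℕ :=
  if (w.drop (i+1)).findIdx (fun b => !b) < (w.drop (i+1)).length
  then i + 1 + (w.drop (i+1)).findIdx (fun b => !b)
  else w.length - 1 - (w.reverse.findIdx (fun b => b))

/-- index of the closest left-child (`true`) leaf strictly before position `i`;
if there is none, the index of the leftmost right-child (`false`) leaf. -/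
def prevTrueIdx (w : List Bool) (i : ℕ) : ℕ :=
  if ((w.take i).reverse).findIdx (fun b => b) < i
  then i - 1 - ((w.take i).reverse).findIdx (fun b => b)
  else w.findIdx (fun b => !b)

/-- position of the leaf where the removed segment is re-glued by `π`. -/
def target (w : List Bool) (i : ℕ) : ℕ :=
  if w.getD i true then prevTrueIdx w i else nextFalseIdx w i

/-- The map `π` on marked trees: remove the segment joining the marked vertex to
its left (resp. right) leaf when the marked vertex is a right (resp. left) child,
and glue it to the next right- (resp. left-) child leaf to the right (resp. left),
with the boundary rule when no such leaf exists; the new vertex is marked. -/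
def piM (M : MTree) : MTree :=
  expand M.collapseT (target M.collapseT.dirs M.markIdx)

open Classical in
/-- Transition rates of the `n`-site open-boundary TASEP, on configurations
encoded as lists of booleans (`true` = •, `false` = ∘). -/
noncomputable def rate (α β : ℝ) (C C' : List Bool) : ℝ :=
  if ∃ A, C = false :: A ∧ C' = true :: A then α
  else if ∃ A, C = A ++ [true] ∧ C' = A ++ [false] then β
  else if ∃ A A', C = A ++ true :: false :: A' ∧ C' = A ++ false :: true :: A' then 1
  else 0

/-- number of active bonds of a configuration: injection at site 1 if empty,
extraction at site n if occupied, and hops across •∘ pairs. -/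
def activeCount (C : List Bool) : ℕ :=
  (if C.head? = some false then 1 else 0) +
  ((C.zip C.tail).count (true, false)) +
  (if C.getLast? = some true then 1 else 0)

/-- the weight `μ(T) = α^{-l(T)} β^{-r(T)}` of a plane binary tree. -/
noncomputable def mu (α β : ℝ) (T : PTree) : ℝ :=
  α ^ (-(T.lCount : ℤ)) * β ^ (-(T.rCount : ℤ))

/-- number of internal vertices on the path from the leftmost leaf to the root,
excluding the marked vertex. -/
def lCountM : MTree → ℕ
  | .mark => 0
  | .nodeL l _ => lCountM l + 1
  | .nodeR l _ => l.lCount + 1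

/-- number of internal vertices on the path from the rightmost leaf to the root,
excluding the marked vertex. -/
def rCountM : MTree → ℕ
  | .mark => 0
  | .nodeR _ r => rCountM r + 1
  | .nodeL _ r => r.rCount + 1

/-- the weight `μ̂` of a marked tree, excluding the marked vertex from the counts. -/
noncomputable def muHat (α β : ℝ) (M : MTree) : ℝ :=
  α ^ (-(lCountM M : ℤ)) * β ^ (-(rCountM M : ℤ))


namespace MarkedCard

open PTree MTree

lemma numLeaves_pos (T : PTree) : 0 < T.numLeaves := by
  induction T with
  | leaf => simp [PTree.numLeaves]
  | node l r ihl ihr => simp [PTree.numLeaves]; omega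

lemma forget_numLeaves (M : MTree) : M.forget.numLeaves = M.collapseT.numLeaves + 1 := by
  induction M with
  | mark => rfl
  | nodeL l r ih => simp [MTree.forget, MTree.collapseT, PTree.numLeaves, ih]; omega
  | nodeR l r ih => simp [MTree.forget, MTree.collapseT, PTree.numLeaves, ih]; omega

lemma markIdx_lt (M : MTree) : M.markIdx < M.collapseT.numLeaves := by
  induction M with
  | mark => simp [MTree.markIdx, MTree.collapseT, PTree.numLeaves]
  | nodeL l r ih =>
      have := numLeaves_pos r
      simp only [MTree.markIdx, MTree.collapseT, PTree.numLeaves]; omega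
  | nodeR l r ih =>
      simp only [MTree.markIdx, MTree.collapseT, PTree.numLeaves]; omega

lemma collapse_expand (T : PTree) (i : ℕ) : (expand T i).collapseT = T := by
  induction T generalizing i with
  | leaf => rfl
  | node l r ihl ihr =>
      simp only [expand]
      split <;> simp [MTree.collapseT, ihl, ihr]

lemma markIdx_expand (T : PTree) (i : ℕ) (h : i < T.numLeaves) : (expand T i).markIdx = i := by
  induction T generalizing i with
  | leaf =>
      simp [PTree.numLeaves] at h
      subst h; rfl
  | node l r ihl ihr =>
      simp only [PTree.numLeaves] at h
      simp only [expand]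
      split
      next h' => simp [MTree.markIdx, ihl i h']
      next h' =>
        simp only [MTree.markIdx]
        rw [ihr (i - l.numLeaves) (by omega)]
        omega

lemma expand_collapse (M : MTree) : expand M.collapseT M.markIdx = M := by
  induction M with
  | mark => rfl
  | nodeL l r ih =>
      simp only [MTree.collapseT, MTree.markIdx, expand]
      rw [if_pos (markIdx_lt l), ih]
  | nodeR l r ih =>
      simp only [MTree.collapseT, MTree.markIdx, expand]
      rw [if_neg (by omega)]
      congr 1
      rw [Nat.add_sub_cancel_left, ih]

/-- translate to mathlib's `Tree Unit` -/
def toTree : PTree → Tree Unit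
  | .leaf => .nil
  | .node l r => .node () (toTree l) (toTree r)

def ofTree : Tree Unit → PTree
  | .nil => .leaf
  | .node _ l r => .node (ofTree l) (ofTree r)

lemma ofTree_toTree (T : PTree) : ofTree (toTree T) = T := by
  induction T with
  | leaf => rfl
  | node l r ihl ihr => simp [toTree, ofTree, ihl, ihr]

lemma toTree_ofTree (t : Tree Unit) : toTree (ofTree t) = t := by
  induction t with
  | nil => rfl
  | node _ l r ihl ihr => simp [toTree, ofTree, ihl, ihr]

lemma numLeaves_toTree (T : PTree) : T.numLeaves = (toTree T).numNodes + 1 := by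
  induction T with
  | leaf => rfl
  | node l r ihl ihr => simp [PTree.numLeaves, toTree, Tree.numNodes, ihl, ihr]; omega

end MarkedCard

open MarkedCard


/-- the number of marked plane binary trees with `n+2` leaves is
`binomial(2n, n)`. -/
theorem markedTree_card (n : ℕ) :
    Nat.card {M : MTree // M.forget.numLeaves = n + 2} = Nat.choose (2 * n) n := by
  have e1 : {M : MTree // M.forget.numLeaves = n + 2} ≃
      {T : PTree // T.numLeaves = n + 1} × Fin (n + 1) :=
    { toFun := fun ⟨M, hM⟩ => (⟨M.collapseT, by have := forget_numLeaves M; omega⟩,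
        ⟨M.markIdx, by have := markIdx_lt M; have := forget_numLeaves M; omega⟩)
      invFun := fun ⟨⟨T, hT⟩, i⟩ => ⟨expand T i, by
        rw [forget_numLeaves, collapse_expand, hT]⟩
      left_inv := fun ⟨M, hM⟩ => by simp [expand_collapse]
      right_inv := fun ⟨⟨T, hT⟩, i⟩ => by
        ext
        · simp [collapse_expand]
        · simp [collapse_expand, markIdx_expand T i (by rw [hT]; exact i.2)] }
  have e2 : {T : PTree // T.numLeaves = n + 1} ≃ {t // t ∈ Tree.treesOfNumNodesEq n} :=
    { toFun := fun ⟨T, hT⟩ => ⟨toTree T, BinaryTree.mem_treesOfNumNodesEq.mpr (by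
        have := numLeaves_toTree T; simp only [Tree.numNodes] at this; omega)⟩
      invFun := fun ⟨t, ht⟩ => ⟨ofTree t, by
        rw [numLeaves_toTree, toTree_ofTree]; exact congrArg (· + 1) (BinaryTree.mem_treesOfNumNodesEq.mp ht)⟩
      left_inv := fun ⟨T, hT⟩ => by simp [ofTree_toTree]
      right_inv := fun ⟨t, ht⟩ => by simp [toTree_ofTree] }
  rw [Nat.card_congr (e1.trans (e2.prodCongr (Equiv.refl (Fin (n + 1))))), Nat.card_prod,
    Nat.card_eq_fintype_card, Nat.card_eq_fintype_card, Fintype.card_coe, Fintype.card_fin,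
    BinaryTree.treesOfNumNodesEq_card_eq_catalan, mul_comm, succ_mul_catalan_eq_centralBinom]
  rfl
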